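/- For every odd integer b ≥ 1, the majority map pushes away from 1/2: if 1/2 ≤ p ≤ 1 then q_b(p) ≥ p, and if 0 ≤ p ≤ 1/2 then q_b(p) ≤ p. -/

import Mathlib

open Finset

/-- The majority function `q_b(p)`: the probability that a `Binomial(b,p)` random
variable is at least `(b+1)/2`. -/
noncomputable def qmaj (b : ℕ) (p : ℝ) : ℝ :=
  ∑ r ∈ Finset.Icc ((b + 1) / 2) b, (b.choose r : ℝ) * p ^ r * (1 - p) ^ (b - r)

lemma qmaj_odd (m : ℕ) (p : ℝ) :
    qmaj (2 * m + 1) p =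
      ∑ r ∈ Finset.Icc (m + 1) (2 * m + 1),
        ((2 * m + 1).choose r : ℝ) * p ^ r * (1 - p) ^ (2 * m + 1 - r) := by
  have : (2 * m + 1 + 1) / 2 = m + 1 := by omega
  rw [qmaj, this]

lemma icc_sum_eq_range (f : ℕ → ℝ) (m : ℕ) :
    ∑ r ∈ Finset.Icc (m + 1) (2 * m + 1), f r
      = ∑ k ∈ Finset.range (m + 1), f (m + 1 + k) := by
  rw [← Finset.Ico_add_one_right_eq_Icc, Finset.sum_Ico_eq_sum_range]
  have : 2 * m + 1 + 1 - (m + 1) = m + 1 := by omega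
  rw [this]

lemma qmaj_add_symm (m : ℕ) (p : ℝ) :
    qmaj (2 * m + 1) p + qmaj (2 * m + 1) (1 - p) = 1 := by
  rw [qmaj_odd, qmaj_odd]
  have h2 : (1 : ℝ) - (1 - p) = p := by ring
  rw [h2]
  have hsym : ∑ r ∈ Finset.Icc (m + 1) (2 * m + 1),
      ((2 * m + 1).choose r : ℝ) * (1 - p) ^ r * p ^ (2 * m + 1 - r)
      = ∑ r ∈ Finset.range (m + 1),
        ((2 * m + 1).choose r : ℝ) * p ^ r * (1 - p) ^ (2 * m + 1 - r) := by
    rw [icc_sum_eq_range]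
    rw [← Finset.sum_range_reflect]
    apply Finset.sum_congr rfl
    intro k hk
    rw [Finset.mem_range] at hk
    have h1 : m + 1 + (m + 1 - 1 - k) = 2 * m + 1 - k := by omega
    have h2 : 2 * m + 1 - (2 * m + 1 - k) = k := by omega
    have h3 : (2 * m + 1).choose (2 * m + 1 - k) = (2 * m + 1).choose k :=
      Nat.choose_symm (by omega)
    rw [h1, h2, h3]
    ring
  rw [hsym]
  have hsplit : ∑ r ∈ Finset.range (m + 1),
        ((2 * m + 1).choose r : ℝ) * p ^ r * (1 - p) ^ (2 * m + 1 - r)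
      + ∑ r ∈ Finset.Icc (m + 1) (2 * m + 1),
        ((2 * m + 1).choose r : ℝ) * p ^ r * (1 - p) ^ (2 * m + 1 - r)
      = ∑ r ∈ Finset.range (2 * m + 1 + 1),
        ((2 * m + 1).choose r : ℝ) * p ^ r * (1 - p) ^ (2 * m + 1 - r) := by
    rw [← Finset.sum_union]
    · congr 1
      ext r
      simp only [Finset.mem_union, Finset.mem_range, Finset.mem_Icc]
      omega
    · rw [Finset.disjoint_left]
      intro r hr hr'
      simp only [Finset.mem_range] at hr
      simp only [Finset.mem_Icc] at hr'
      omega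
  rw [add_comm, hsplit]
  have h4 := add_pow p (1 - p) (2 * m + 1)
  have hpq : p + (1 - p) = 1 := by ring
  rw [hpq, one_pow] at h4
  calc ∑ r ∈ Finset.range (2 * m + 1 + 1),
        ((2 * m + 1).choose r : ℝ) * p ^ r * (1 - p) ^ (2 * m + 1 - r)
      = ∑ r ∈ Finset.range (2 * m + 1 + 1),
        p ^ r * (1 - p) ^ (2 * m + 1 - r) * ((2 * m + 1).choose r : ℝ) := by
        apply Finset.sum_congr rfl; intro r _; ring
    _ = 1 := h4.symm

lemma qmaj_one (m : ℕ) : qmaj (2 * m + 1) 1 = 1 := by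
  rw [qmaj_odd]
  rw [Finset.sum_eq_single_of_mem (2 * m + 1) (by simp [Finset.mem_Icc]; omega)]
  · simp
  · intro r hr hne
    rw [Finset.mem_Icc] at hr
    have h : (1 : ℝ) - 1 = 0 := by ring
    rw [h, zero_pow (by omega)]
    ring

lemma qmaj_half (m : ℕ) : qmaj (2 * m + 1) (1 / 2 : ℝ) = 1 / 2 := by
  have h1 := qmaj_add_symm m (1 / 2 : ℝ)
  have h : (1 : ℝ) - 1 / 2 = 1 / 2 := by norm_num
  rw [h] at h1
  linarith

lemma qmaj_hasDerivAt (m : ℕ) (p : ℝ) :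
    HasDerivAt (fun x => qmaj (2 * m + 1) x)
      (((2 * m + 1 : ℕ) : ℝ) * ((2 * m).choose m : ℝ) * (p ^ m * (1 - p) ^ m)) p := by
  have key : ∀ x : ℝ, qmaj (2 * m + 1) x =
      ∑ r ∈ Finset.Icc (m + 1) (2 * m + 1),
        ((2 * m + 1).choose r : ℝ) * x ^ r * (1 - x) ^ (2 * m + 1 - r) := qmaj_odd m
  rw [show (fun x => qmaj (2 * m + 1) x) = fun x =>
      ∑ r ∈ Finset.Icc (m + 1) (2 * m + 1),
        ((2 * m + 1).choose r : ℝ) * x ^ r * (1 - x) ^ (2 * m + 1 - r) from funext key]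
  set u : ℕ → ℝ := fun r =>
    ((2 * m + 1 : ℕ) : ℝ) * ((2 * m).choose r : ℝ) * (p ^ r * (1 - p) ^ (2 * m - r)) with hu
  have hderiv : ∀ r ∈ Finset.Icc (m + 1) (2 * m + 1),
      HasDerivAt (fun x : ℝ => ((2 * m + 1).choose r : ℝ) * x ^ r * (1 - x) ^ (2 * m + 1 - r))
        (u (r - 1) - u r) p := by
    intro r hr
    rw [Finset.mem_Icc] at hr
    obtain ⟨s, t, hst, rfl⟩ : ∃ s t, s + t = 2 * m ∧ r = s + 1 :=
      ⟨r - 1, 2 * m + 1 - r, by omega, by omega⟩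
    have h1 : HasDerivAt (fun x : ℝ => x ^ (s + 1)) (((s : ℝ) + 1) * p ^ s) p := by
      have := hasDerivAt_pow (s + 1) p
      simpa using this
    have hinner : HasDerivAt (fun x : ℝ => 1 - x) (-1 : ℝ) p := by
      simpa using (hasDerivAt_id' p).const_sub (1 : ℝ)
    have hE1 : 2 * m + 1 - (s + 1) = t := by omega
    have h2 : HasDerivAt (fun x : ℝ => (1 - x) ^ (2 * m + 1 - (s + 1)))
        (((t : ℕ) : ℝ) * (1 - p) ^ (t - 1) * (-1)) p := by
      rw [hE1]
      exact (hasDerivAt_pow t (1 - p)).comp p hinner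
    have h3 := (h1.const_mul (((2 * m + 1).choose (s + 1) : ℝ))).mul h2
    refine h3.congr_deriv ?_
    symm
    have hE3 : s + 1 - 1 = s := by omega
    have hE4 : 2 * m - s = t := by omega
    have hE5 : 2 * m - (s + 1) = t - 1 := by omega
    simp only [hu, hE1, hE3, hE4, hE5]
    have A : ((2 * m + 1).choose (s + 1) : ℝ) * ((s : ℝ) + 1)
        = ((2 * m + 1 : ℕ) : ℝ) * ((2 * m).choose s : ℝ) := by
      have h := Nat.add_one_mul_choose_eq (2 * m) s
      exact_mod_cast h.symm
    have B : ((2 * m + 1).choose (s + 1) : ℝ) * ((t : ℕ) : ℝ)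
        = ((2 * m + 1 : ℕ) : ℝ) * ((2 * m).choose (s + 1) : ℝ) := by
      have h1' := Nat.choose_succ_right_eq (2 * m + 1) (s + 1)
      have h2' := Nat.add_one_mul_choose_eq (2 * m) (s + 1)
      have ht : 2 * m + 1 - (s + 1) = t := by omega
      rw [ht] at h1'
      have : (2 * m + 1).choose (s + 1) * t = (2 * m + 1) * (2 * m).choose (s + 1) := by
        rw [← h1', h2']
      exact_mod_cast this
    linear_combination (p ^ (s + 1) * (1 - p) ^ (t - 1)) * B - (p ^ s * (1 - p) ^ t) * A
  have hsum := HasDerivAt.fun_sum hderiv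
  refine hsum.congr_deriv ?_
  symm
  rw [icc_sum_eq_range (fun r => u (r - 1) - u r)]
  have hs : ∑ k ∈ Finset.range (m + 1), (u (m + 1 + k - 1) - u (m + 1 + k))
      = ∑ k ∈ Finset.range (m + 1), (u (m + k) - u (m + (k + 1))) := by
    apply Finset.sum_congr rfl
    intro k _
    congr 2 <;> omega
  rw [hs, Finset.sum_range_sub' (fun k => u (m + k))]
  have h0 : m + 0 = m := rfl
  have hb : m + (m + 1) = 2 * m + 1 := by omega
  rw [h0, hb]
  have hz : u (2 * m + 1) = 0 := by
    simp [hu, Nat.choose_eq_zero_of_lt (by omega : 2 * m < 2 * m + 1)]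
  rw [hz, sub_zero]
  have h2m : 2 * m - m = m := by omega
  simp [hu, h2m]

theorem majority_pushes_away_from_half (b : ℕ) (hb : Odd b) (hb1 : 1 ≤ b) (p : ℝ) :
    (1 / 2 ≤ p → p ≤ 1 → p ≤ qmaj b p) ∧ (0 ≤ p → p ≤ 1 / 2 → qmaj b p ≤ p) := by
  obtain ⟨m, rfl⟩ := hb
  -- `f x = qmaj (2m+1) x - x` is concave on `[1/2, 1]` with zero endpoints
  set f : ℝ → ℝ := fun x => qmaj (2 * m + 1) x - x with hf
  have hdf : ∀ x : ℝ, HasDerivAt f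
      (((2 * m + 1 : ℕ) : ℝ) * ((2 * m).choose m : ℝ) * (x ^ m * (1 - x) ^ m) - 1) x := by
    intro x
    exact (qmaj_hasDerivAt m x).sub (hasDerivAt_id x)
  have hderiv_eq : deriv f = fun x =>
      ((2 * m + 1 : ℕ) : ℝ) * ((2 * m).choose m : ℝ) * (x ^ m * (1 - x) ^ m) - 1 :=
    funext fun x => (hdf x).deriv
  have hconc : ConcaveOn ℝ (Set.Icc (1 / 2 : ℝ) 1) f := by
    apply AntitoneOn.concaveOn_of_deriv (convex_Icc _ _)
    · exact fun x _ => ((hdf x).differentiableAt).continuousAt.continuousWithinAt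
    · exact fun x _ => ((hdf x).differentiableAt).differentiableWithinAt
    · rw [hderiv_eq]
      rw [interior_Icc]
      intro x hx y hy hxy
      simp only [Set.mem_Ioo] at hx hy
      dsimp only
      have hxy2 : y * (1 - y) ≤ x * (1 - x) := by nlinarith
      have hy0 : 0 ≤ y * (1 - y) := by nlinarith
      have hpow : (y * (1 - y)) ^ m ≤ (x * (1 - x)) ^ m := pow_le_pow_left₀ hy0 hxy2 m
      rw [mul_pow, mul_pow] at hpow
      have hK : (0 : ℝ) ≤ ((2 * m + 1 : ℕ) : ℝ) * ((2 * m).choose m : ℝ) := by positivity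
      have := mul_le_mul_of_nonneg_left hpow hK
      linarith
  have hf_half : f (1 / 2) = 0 := by simp only [hf, qmaj_half m, sub_self]
  have hf_one : f 1 = 0 := by simp only [hf, qmaj_one m, sub_self]
  have main : ∀ x : ℝ, 1 / 2 ≤ x → x ≤ 1 → x ≤ qmaj (2 * m + 1) x := by
    intro x hx1 hx2
    have ha : (0 : ℝ) ≤ 2 - 2 * x := by linarith
    have hc : (0 : ℝ) ≤ 2 * x - 1 := by linarith
    have habc : (2 - 2 * x) + (2 * x - 1) = 1 := by ring
    have hmem1 : (1 / 2 : ℝ) ∈ Set.Icc (1 / 2 : ℝ) 1 := by constructor <;> norm_num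
    have hmem2 : (1 : ℝ) ∈ Set.Icc (1 / 2 : ℝ) 1 := by constructor <;> norm_num
    have := hconc.2 hmem1 hmem2 ha hc habc
    have hxe : (2 - 2 * x) • (1 / 2 : ℝ) + (2 * x - 1) • (1 : ℝ) = x := by
      simp only [smul_eq_mul]; ring
    rw [hxe, hf_half, hf_one] at this
    simp only [smul_eq_mul, mul_zero, add_zero] at this
    have : (0 : ℝ) ≤ f x := this
    simp only [hf] at this
    linarith
  constructor
  · exact fun h1 h2 => main p h1 h2
  · intro h1 h2
    have hsym := qmaj_add_symm m p
    have h1p : 1 / 2 ≤ 1 - p := by linarith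
    have h2p : 1 - p ≤ 1 := by linarith
    have := main (1 - p) h1p h2p
    linarith
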